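/- Let R be a graded ring with R_0 = k a field, and let I ⊆ R be a finitely generated homogeneous ideal. Then I has a generating set g_1,...,g_r of homogeneous elements such that for each 1 ≤ k ≤ r, the strength of g_k equals the collective strength of g_1,...,g_k. -/
import Mathlib


variable {k R : Type*}

/-- `f` admits a decomposition `f = Σ_{i=1}^{n} g_i h_i` with all `g_i, h_i`
homogeneous of positive degree. -/
def HasStrengthDecomp [Field k] [CommRing R] [Algebra k R] (𝒜 : ℕ → Submodule k R)
    (f : R) (n : ℕ) : Prop :=
  ∃ g h : Fin n → R,
    (∀ i, ∃ d : ℕ, 0 < d ∧ g i ∈ 𝒜 d) ∧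
    (∀ i, ∃ d : ℕ, 0 < d ∧ h i ∈ 𝒜 d) ∧
    f = ∑ i, g i * h i

/-- The strength of `f`: the minimal `s ≥ -1` such that `f = Σ_{i=1}^{s+1} g_i h_i`
with all `g_i, h_i` homogeneous of positive degree, or `∞` if there is no such
decomposition.  It is valued in `WithBot ℕ∞`, where `⊥` plays the role of `-1`
(the strength of `0`) and `⊤` is `∞`. -/
noncomputable def strength [Field k] [CommRing R] [Algebra k R] (𝒜 : ℕ → Submodule k R)
    (f : R) : WithBot ℕ∞ :=
  sInf ((fun n : ℕ => if n = 0 then (⊥ : WithBot ℕ∞) else (((n - 1 : ℕ) : ℕ∞) : WithBot ℕ∞))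
    '' {n : ℕ | HasStrengthDecomp 𝒜 f n})

/-- The collective strength of `f_1, ..., f_m`: the minimal strength of a nontrivial
homogeneous `k`-linear combination of the `f_i`. -/
noncomputable def collectiveStrength [Field k] [CommRing R] [Algebra k R]
    (𝒜 : ℕ → Submodule k R) {m : ℕ} (f : Fin m → R) : WithBot ℕ∞ :=
  sInf (strength 𝒜 ''
    {x : R | (∃ a : Fin m → k, a ≠ 0 ∧ x = ∑ i, a i • f i) ∧ ∃ d : ℕ, x ∈ 𝒜 d})

section Aux

variable (k) [Field k] [CommRing R] [Algebra k R]

def NTset {n : ℕ} (f : Fin n → R) : Set R :=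
  {x | ∃ a : Fin n → k, a ≠ 0 ∧ x = ∑ i, a i • f i}

def NTaux {n : ℕ} (u : Fin n → R) (x : R) : Set R :=
  {y | ∃ (b : Fin n → k) (c : k), (b ≠ 0 ∨ c ≠ 0) ∧ y = (∑ i, b i • u i) + c • x}

variable {k}

lemma sum_smul_split {n : ℕ} (f : Fin (n + 1) → R) (i₀ : Fin (n + 1)) (v : Fin (n + 1) → k) :
    ∑ j, v j • f j = v i₀ • f i₀ + ∑ i, v (i₀.succAbove i) • f (i₀.succAbove i) :=
  Fin.sum_univ_succAbove (fun j => v j • f j) i₀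

lemma mem_NTset_self {n : ℕ} (f : Fin n → R) (i : Fin n) : f i ∈ NTset k f := by
  refine ⟨Pi.single i 1, ?_, ?_⟩
  · intro h
    have := congrFun h i
    simp at this
  · simp [Pi.single_apply, ite_smul]

lemma NTset_subset_span {n : ℕ} (f : Fin n → R) :
    NTset k f ⊆ (Ideal.span (Set.range f) : Set R) := by
  rintro x ⟨a, -, rfl⟩
  exact Submodule.sum_mem _ fun i _ =>
    Submodule.smul_of_tower_mem _ _ (Ideal.subset_span ⟨i, rfl⟩)

lemma NTaux_eq_NTset {n : ℕ} (f : Fin (n + 1) → R) (i₀ : Fin (n + 1))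
    (a : Fin (n + 1) → k) (ha : a i₀ ≠ 0) (x : R) (hx : x = ∑ i, a i • f i) :
    NTaux k (fun i => f (i₀.succAbove i)) x = NTset k f := by
  have hsum_c : ∀ c : k, c • x
      = (c * a i₀) • f i₀ + ∑ i, (c * a (i₀.succAbove i)) • f (i₀.succAbove i) := by
    intro c
    rw [hx, Finset.smul_sum]
    simp only [smul_smul]
    exact sum_smul_split f i₀ (fun j => c * a j)
  ext y
  constructor
  · rintro ⟨b, c, hbc, rfl⟩
    set a'' : Fin (n + 1) → k := fun j => Fin.insertNth (α := fun _ => k) i₀ (0 : k) b j + c * a j with ha''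
    have ha''i₀ : a'' i₀ = c * a i₀ := by simp [ha'', Fin.insertNth_apply_same]
    have ha''sA : ∀ i, a'' (i₀.succAbove i) = b i + c * a (i₀.succAbove i) := fun i => by
      simp [ha'', Fin.insertNth_apply_succAbove]
    refine ⟨a'', ?_, ?_⟩
    · rcases eq_or_ne c 0 with hc | hc
      · have hb : b ≠ 0 := by
          rcases hbc with hb | hc'
          · exact hb
          · exact absurd hc hc'
        obtain ⟨i, hi⟩ := Function.ne_iff.mp hb
        intro h
        have h2 := congrFun h (i₀.succAbove i)
        rw [ha''sA, hc] at h2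
        simp at h2
        exact hi h2
      · intro h
        have h2 : c * a i₀ = 0 := by
          rw [← ha''i₀]
          exact congrFun h i₀
        rcases mul_eq_zero.mp h2 with h' | h'
        · exact hc h'
        · exact ha h'
    · calc (∑ i, b i • f (i₀.succAbove i)) + c • x
          = (c * a i₀) • f i₀ + ∑ i, (b i • f (i₀.succAbove i)
              + (c * a (i₀.succAbove i)) • f (i₀.succAbove i)) := by
            rw [hsum_c c, Finset.sum_add_distrib]; abel
        _ = ∑ j, a'' j • f j := by
            rw [sum_smul_split f i₀ a'']
            simp only [ha''i₀, ha''sA, add_smul]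
  · rintro ⟨a', ha', rfl⟩
    set c : k := a' i₀ * (a i₀)⁻¹ with hc
    have hca : c * a i₀ = a' i₀ := by
      rw [hc, mul_assoc, inv_mul_cancel₀ ha, mul_one]
    refine ⟨fun i => a' (i₀.succAbove i) - c * a (i₀.succAbove i), c, ?_, ?_⟩
    · rcases eq_or_ne c 0 with hc0 | hc0
      · left
        have hai₀ : a' i₀ = 0 := by rw [← hca, hc0, zero_mul]
        obtain ⟨j, hj⟩ := Function.ne_iff.mp ha'
        have hji₀ : j ≠ i₀ := by rintro rfl; exact hj hai₀
        obtain ⟨i, hi⟩ := Fin.exists_succAbove_eq hji₀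
        intro h
        have h2 := congrFun h i
        simp only [hc0, zero_mul, sub_zero, Pi.zero_apply] at h2
        rw [hi] at h2
        exact hj h2
      · right; exact hc0
    · calc ∑ j, a' j • f j
          = a' i₀ • f i₀ + ∑ i, a' (i₀.succAbove i) • f (i₀.succAbove i) :=
            sum_smul_split f i₀ a'
        _ = (c * a i₀) • f i₀ + ∑ i, ((a' (i₀.succAbove i) - c * a (i₀.succAbove i))
              • f (i₀.succAbove i) + (c * a (i₀.succAbove i)) • f (i₀.succAbove i)) := by
            rw [hca]
            congr 1
            refine Finset.sum_congr rfl fun i _ => ?_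
            rw [← add_smul, sub_add_cancel]
        _ = (∑ i, (a' (i₀.succAbove i) - c * a (i₀.succAbove i)) • f (i₀.succAbove i))
              + c • x := by
            rw [Finset.sum_add_distrib, hsum_c c]; abel

lemma NTaux_congr {n m : ℕ} {u : Fin n → R} {v : Fin m → R}
    (h : NTset k u = NTset k v) (x : R) : NTaux k u x ⊆ NTaux k v x := by
  rintro y ⟨b, c, hbc, rfl⟩
  rcases eq_or_ne b 0 with hb | hb
  · have hc : c ≠ 0 := by
      rcases hbc with hb' | hc
      · exact absurd hb hb'
      · exact hc
    refine ⟨0, c, Or.inr hc, ?_⟩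
    simp [hb]
  · have : (∑ i, b i • u i) ∈ NTset k v := h ▸ ⟨b, hb, rfl⟩
    obtain ⟨b', hb', heq⟩ := this
    exact ⟨b', c, Or.inl hb', by rw [heq]⟩

lemma sum_smul_split_last {n : ℕ} (w : Fin (n + 1) → R) (v : Fin (n + 1) → k) :
    ∑ j, v j • w j = (∑ i, v (Fin.castSucc i) • w (Fin.castSucc i))
      + v (Fin.last n) • w (Fin.last n) :=
  Fin.sum_univ_castSucc (fun j => v j • w j)

lemma NTset_snoc {n : ℕ} (u : Fin n → R) (x : R) :
    NTset k (Fin.snoc u x) = NTaux k u x := by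
  have hsum : ∀ β : Fin (n + 1) → k,
      ∑ i, β i • Fin.snoc u x i = (∑ i, β (Fin.castSucc i) • u i) + β (Fin.last n) • x := by
    intro β
    rw [sum_smul_split_last (Fin.snoc u x) β]
    simp [Fin.snoc_castSucc, Fin.snoc_last]
  ext y
  constructor
  · rintro ⟨β, hβ, rfl⟩
    refine ⟨fun i => β (Fin.castSucc i), β (Fin.last n), ?_, hsum β⟩
    by_contra hcon
    push_neg at hcon
    obtain ⟨h1, h2⟩ := hcon
    apply hβ
    funext j
    rcases Fin.eq_castSucc_or_eq_last j with ⟨i, rfl⟩ | rfl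
    · exact congrFun (not_not.mp (fun hh => hh h1)) i
    · exact not_not.mp (fun hh => hh h2)
  · rintro ⟨b, c, hbc, rfl⟩
    refine ⟨Fin.snoc b c, ?_, ?_⟩
    · intro h
      rcases hbc with hb | hc
      · obtain ⟨i, hi⟩ := Function.ne_iff.mp hb
        exact hi (by simpa [Fin.snoc_castSucc] using congrFun h (Fin.castSucc i))
      · exact hc (by simpa [Fin.snoc_last] using congrFun h (Fin.last n))
    · rw [hsum]
      simp [Fin.snoc_castSucc, Fin.snoc_last]

end Aux
section Main

variable [Field k] [CommRing R] [Algebra k R]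

lemma collectiveStrength_eq_sInf (𝒜 : ℕ → Submodule k R) {m : ℕ} (f : Fin m → R) :
    collectiveStrength 𝒜 f =
      sInf (strength 𝒜 '' {x : R | x ∈ NTset k f ∧ ∃ d : ℕ, x ∈ 𝒜 d}) := rfl

lemma collectiveStrength_congr (𝒜 : ℕ → Submodule k R) {m m' : ℕ}
    {u : Fin m → R} {v : Fin m' → R} (h : NTset k u = NTset k v) :
    collectiveStrength 𝒜 u = collectiveStrength 𝒜 v := by
  rw [collectiveStrength_eq_sInf, collectiveStrength_eq_sInf, h]

lemma main_induction (𝒜 : ℕ → Submodule k R) :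
    ∀ (n : ℕ) (f : Fin n → R), (∀ i, ∃ d : ℕ, f i ∈ 𝒜 d) →
      ∃ g : Fin n → R, (∀ i, ∃ d : ℕ, g i ∈ 𝒜 d) ∧ NTset k g = NTset k f ∧
        ∀ j : Fin n, strength 𝒜 (g j) =
          collectiveStrength 𝒜 (fun i : Fin ((j : ℕ) + 1) => g (Fin.castLE j.isLt i)) := by
  intro n
  induction n with
  | zero => exact fun f hf => ⟨f, hf, rfl, fun j => j.elim0⟩
  | succ n ih =>
    intro f hf
    set W : Set R := {x : R | x ∈ NTset k f ∧ ∃ d : ℕ, x ∈ 𝒜 d} with hWdef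
    have hWne : W.Nonempty := ⟨f 0, mem_NTset_self f 0, hf 0⟩
    obtain ⟨s, hsmem, hsmin⟩ :=
      (wellFounded_lt (α := WithBot ℕ∞)).has_min (strength 𝒜 '' W) (hWne.image _)
    obtain ⟨x, hxW, hsx⟩ := hsmem
    have hxmin : ∀ y ∈ W, strength 𝒜 x ≤ strength 𝒜 y := fun y hy =>
      hsx ▸ not_lt.mp (hsmin _ (Set.mem_image_of_mem _ hy))
    obtain ⟨⟨a, ha, hxa⟩, d, hxd⟩ := hxW
    have hxW' : x ∈ W := ⟨⟨a, ha, hxa⟩, d, hxd⟩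
    obtain ⟨i₀, hi₀⟩ := Function.ne_iff.mp ha
    obtain ⟨g', hg'hom, hg'NT, hg'str⟩ :=
      ih (fun i => f (i₀.succAbove i)) (fun i => hf _)
    have hNTg : NTset k (Fin.snoc g' x) = NTset k f := by
      rw [NTset_snoc]
      refine le_antisymm ?_ ?_
      · refine subset_trans (NTaux_congr hg'NT x) ?_
        rw [NTaux_eq_NTset f i₀ a hi₀ x hxa]
      · rw [← NTaux_eq_NTset f i₀ a hi₀ x hxa]
        exact NTaux_congr hg'NT.symm x
    refine ⟨Fin.snoc g' x, ?_, hNTg, ?_⟩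
    · intro i
      induction i using Fin.lastCases with
      | last => rw [Fin.snoc_last]; exact ⟨d, hxd⟩
      | cast i => rw [Fin.snoc_castSucc]; exact hg'hom i
    · intro j
      induction j using Fin.lastCases with
      | last =>
        have hfun : (fun i : Fin (((Fin.last n : Fin (n + 1)) : ℕ) + 1) =>
            (Fin.snoc g' x : Fin (n + 1) → R) (Fin.castLE (Fin.last n).isLt i))
            = (Fin.snoc g' x : Fin (n + 1) → R) := rfl
        rw [Fin.snoc_last, hfun, collectiveStrength_eq_sInf, hNTg, ← hWdef]
        refine le_antisymm ?_ ?_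
        · exact le_sInf (by rintro b ⟨y, hy, rfl⟩; exact hxmin y hy)
        · exact sInf_le (Set.mem_image_of_mem _ hxW')
      | cast j' =>
        have hfun : (fun i : Fin (((Fin.castSucc j' : Fin (n + 1)) : ℕ) + 1) =>
            (Fin.snoc g' x : Fin (n + 1) → R) (Fin.castLE (Fin.castSucc j').isLt i))
            = fun i : Fin ((j' : ℕ) + 1) => g' (Fin.castLE j'.isLt i) := by
          funext i
          exact Fin.snoc_castSucc (α := fun _ : Fin (n + 1) => R) x g' (Fin.castLE j'.isLt i)
        rw [Fin.snoc_castSucc, hfun]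
        exact hg'str j'

lemma exists_fin_homogeneous_generators (𝒜 : ℕ → Submodule k R) [GradedAlgebra 𝒜]
    (I : Ideal R) (hfg : I.FG) (hhom : Ideal.IsHomogeneous 𝒜 I) :
    ∃ (n : ℕ) (f : Fin n → R), (∀ i, ∃ d : ℕ, f i ∈ 𝒜 d) ∧
      Ideal.span (Set.range f) = I := by
  classical
  obtain ⟨S, hS⟩ := hfg
  let G : Finset R := S.biUnion fun s =>
    (DirectSum.decompose 𝒜 s).support.image fun d => ((DirectSum.decompose 𝒜 s) d : R)
  have hGmem1 : ∀ x ∈ G, ∃ s ∈ S, ∃ d, x = ((DirectSum.decompose 𝒜 s) d : R) := by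
    intro x hx
    simp only [G, Finset.mem_biUnion, Finset.mem_image] at hx
    obtain ⟨s, hs, d, -, rfl⟩ := hx
    exact ⟨s, hs, d, rfl⟩
  have hGmem2 : ∀ s ∈ S, ∀ d ∈ (DirectSum.decompose 𝒜 s).support,
      ((DirectSum.decompose 𝒜 s) d : R) ∈ G := by
    intro s hs d hd
    simp only [G, Finset.mem_biUnion, Finset.mem_image]
    exact ⟨s, hs, d, hd, rfl⟩
  have hGhom : ∀ x ∈ G, ∃ d : ℕ, x ∈ 𝒜 d := by
    intro x hx
    obtain ⟨s, -, d, rfl⟩ := hGmem1 x hx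
    exact ⟨d, ((DirectSum.decompose 𝒜 s) d).2⟩
  have hGspan : Ideal.span (↑G : Set R) = I := by
    refine le_antisymm ?_ ?_
    · rw [Ideal.span_le]
      intro x hx
      obtain ⟨s, hs, d, rfl⟩ := hGmem1 x hx
      exact hhom d (hS ▸ Ideal.subset_span hs)
    · rw [← hS, Ideal.span_le]
      intro s hs
      rw [← DirectSum.sum_support_decompose 𝒜 s]
      exact Submodule.sum_mem _ fun d hd => Ideal.subset_span (hGmem2 s hs d hd)
  refine ⟨G.card, fun i => (G.equivFin.symm i : R), ?_, ?_⟩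
  · intro i
    exact hGhom _ (G.equivFin.symm i).2
  · rw [← hGspan]
    congr 1
    ext x
    constructor
    · rintro ⟨i, rfl⟩; exact (G.equivFin.symm i).2
    · intro hx
      exact ⟨G.equivFin ⟨x, hx⟩, by simp⟩

end Main

/-- **Lemma (Erman–Sam–Snowden, Lemma 2.1).**
Let `R` be a graded ring with `R₀ = k` a field.  Every finitely generated homogeneous
ideal `I ⊆ R` has a generating set `g_1, ..., g_r` of homogeneous elements such that,
for each `1 ≤ j ≤ r`, the strength of `g_j` equals the collective strength of
`g_1, ..., g_j`. -/
theorem exists_generators_strength_eq_collectiveStrength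
    [Field k] [CommRing R] [Algebra k R] (𝒜 : ℕ → Submodule k R) [GradedAlgebra 𝒜]
    (h0 : ∀ x ∈ 𝒜 0, ∃ c : k, algebraMap k R c = x)
    (I : Ideal R) (hfg : I.FG) (hhom : Ideal.IsHomogeneous 𝒜 I) :
    ∃ (r : ℕ) (g : Fin r → R),
      (∀ i, ∃ d : ℕ, g i ∈ 𝒜 d) ∧
      Ideal.span (Set.range g) = I ∧
      ∀ j : Fin r, strength 𝒜 (g j) =
        collectiveStrength 𝒜 (fun i : Fin ((j : ℕ) + 1) => g (Fin.castLE j.isLt i)) := by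
  classical
  obtain ⟨n, f, hfhom, hfspan⟩ := exists_fin_homogeneous_generators 𝒜 I hfg hhom
  obtain ⟨g, hghom, hgNT, hgstr⟩ := main_induction 𝒜 n f hfhom
  refine ⟨n, g, hghom, ?_, hgstr⟩
  have h1 : Ideal.span (Set.range g) = Ideal.span (Set.range f) := by
    refine le_antisymm (Ideal.span_le.mpr ?_) (Ideal.span_le.mpr ?_)
    · rintro x ⟨i, rfl⟩
      exact NTset_subset_span f (hgNT ▸ mem_NTset_self g i)
    · rintro x ⟨i, rfl⟩
      exact NTset_subset_span g (hgNT.symm ▸ mem_NTset_self f i)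
  rw [h1, hfspan]
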